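/- Let L = (0,1) \ C be the Cantor string. Then for every ε with 0 < ε ≤ 1/6, the Lebesgue measure of {x ∈ L : dist(x, ∂L) ≤ ε} equals 2ε(2^n − 1) + (3/2)(2/3)^{n+1}, where n = ⌊log(1/(2ε)) / log 3⌋. -/

import Mathlib

open MeasureTheory Metric Set
open scoped ENNReal

namespace Stmt4
noncomputable section

def f (b : Bool) (x : ℝ) : ℝ := x / 3 + if b then 2/3 else 0

def fw : List Bool → ℝ → ℝ
  | [] => id
  | b :: w => f b ∘ fw w

lemma fw_nil : fw [] = id := rfl
lemma fw_cons (b w) : fw (b :: w) = f b ∘ fw w := rfl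

lemma fw_append (u v : List Bool) : fw (u ++ v) = fw u ∘ fw v := by
  induction u with
  | nil => rfl
  | cons b u ih => simp [fw_cons, ih, Function.comp_assoc]

lemma fw_eq (w : List Bool) (x : ℝ) :
    fw w x = x / 3 ^ w.length + fw w 0 := by
  induction w with
  | nil => simp [fw]
  | cons b w ih =>
    simp only [fw_cons, Function.comp_apply, f, List.length_cons, ih]
    ring

lemma f_strictMono (b : Bool) : StrictMono (f b) := by
  intro x y h; simp only [f]; nlinarith

lemma fw_strictMono (w : List Bool) : StrictMono (fw w) := by
  intro x y h
  rw [fw_eq w x, fw_eq w y]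
  have : (0:ℝ) < 3 ^ w.length := by positivity
  gcongr

lemma fw_image_Ioo (w : List Bool) (a b : ℝ) :
    fw w '' Ioo a b = Ioo (fw w a) (fw w b) := by
  ext x
  constructor
  · rintro ⟨y, hy, rfl⟩
    exact ⟨fw_strictMono w hy.1, fw_strictMono w hy.2⟩
  · rintro ⟨h1, h2⟩
    refine ⟨(x - fw w 0) * 3 ^ w.length, ?_, ?_⟩
    · rw [fw_eq w a] at h1; rw [fw_eq w b] at h2
      have h3 : (0:ℝ) < 3 ^ w.length := by positivity
      constructor
      · rw [div_add' _ _ _ h3.ne'] at h1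
        nlinarith [(div_lt_iff₀ h3).mp h1]
      · rw [div_add' _ _ _ h3.ne'] at h2
        nlinarith [(lt_div_iff₀ h3).mp h2]
    · rw [fw_eq]
      field_simp
      ring

lemma fw_image_Icc (w : List Bool) (a b : ℝ) :
    fw w '' Icc a b = Icc (fw w a) (fw w b) := by
  ext x
  constructor
  · rintro ⟨y, hy, rfl⟩
    exact ⟨(fw_strictMono w).monotone hy.1, (fw_strictMono w).monotone hy.2⟩
  · rintro ⟨h1, h2⟩
    refine ⟨(x - fw w 0) * 3 ^ w.length, ?_, ?_⟩
    · rw [fw_eq w a] at h1; rw [fw_eq w b] at h2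
      have h3 : (0:ℝ) < 3 ^ w.length := by positivity
      constructor
      · rw [div_add' _ _ _ h3.ne'] at h1
        nlinarith [(div_le_iff₀ h3).mp h1]
      · rw [div_add' _ _ _ h3.ne'] at h2
        nlinarith [(le_div_iff₀ h3).mp h2]
    · rw [fw_eq]
      field_simp
      ring

lemma fw_dist (w : List Bool) (x y : ℝ) :
    |fw w x - fw w y| = |x - y| / 3 ^ w.length := by
  rw [fw_eq w x, fw_eq w y]
  rw [show x / 3 ^ w.length + fw w 0 - (y / 3 ^ w.length + fw w 0)
      = (x - y) / 3 ^ w.length by ring]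
  rw [abs_div, abs_of_pos (by positivity : (0:ℝ) < 3 ^ w.length)]

lemma f_image (b : Bool) (S : Set ℝ) : fw [b] '' S = f b '' S := by
  rw [fw_cons, fw_nil]
  simp

lemma f_mem_Icc {x : ℝ} (b : Bool) (hx : x ∈ Icc (0:ℝ) 1) : f b x ∈ Icc (0:ℝ) 1 := by
  obtain ⟨h1, h2⟩ := hx
  cases b <;> simp only [f, if_true, if_false] <;> constructor <;> norm_num <;> linarith

lemma f_false_apply (x : ℝ) : f false x = x / 3 := by simp [f]
lemma f_true_apply (x : ℝ) : f true x = x / 3 + 2/3 := by simp [f]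


lemma Cone_mem {C : Set ℝ} (hCne : C.Nonempty) (hCc : IsCompact C)
    (hC : C = (fun x : ℝ => x / 3) '' C ∪ (fun x : ℝ => x / 3 + 2 / 3) '' C) :
    (1:ℝ) ∈ C ∧ ∀ x ∈ C, x ≤ 1 := by
  set M := sSup C with hM
  have hMC : M ∈ C := hCc.sSup_mem hCne
  have hbdd : BddAbove C := hCc.bddAbove
  have h1 : M / 3 + 2 / 3 ∈ C := by
    rw [hC]; right; exact ⟨M, hMC, rfl⟩
  have h2 : M / 3 + 2 / 3 ≤ M := le_csSup hbdd h1
  have hM1 : 1 ≤ M := by linarith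
  have h3 : M ≤ 1 := by
    have := hMC
    rw [hC] at this
    rcases this with ⟨c, hc, hce⟩ | ⟨c, hc, hce⟩
    · have : c ≤ M := le_csSup hbdd hc
      simp only at hce
      nlinarith
    · have : c ≤ M := le_csSup hbdd hc
      simp only at hce
      nlinarith
  have hMe : M = 1 := le_antisymm h3 hM1
  rw [hMe] at hMC
  exact ⟨hMC, fun x hx => hMe ▸ le_csSup hbdd hx⟩

lemma Czero_mem {C : Set ℝ} (hCne : C.Nonempty) (hCc : IsCompact C)
    (hC : C = (fun x : ℝ => x / 3) '' C ∪ (fun x : ℝ => x / 3 + 2 / 3) '' C) :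
    (0:ℝ) ∈ C ∧ ∀ x ∈ C, 0 ≤ x := by
  set m := sInf C with hm
  have hmC : m ∈ C := hCc.sInf_mem hCne
  have hbdd : BddBelow C := hCc.bddBelow
  have h1 : m / 3 ∈ C := by
    rw [hC]; left; exact ⟨m, hmC, rfl⟩
  have h2 : m ≤ m / 3 := csInf_le hbdd h1
  have hm0 : m ≤ 0 := by linarith
  have h3 : 0 ≤ m := by
    have := hmC
    rw [hC] at this
    rcases this with ⟨c, hc, hce⟩ | ⟨c, hc, hce⟩
    · have : m ≤ c := csInf_le hbdd hc
      simp only at hce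
      nlinarith
    · have : m ≤ c := csInf_le hbdd hc
      simp only at hce
      nlinarith
  have hme : m = 0 := le_antisymm hm0 h3
  rw [hme] at hmC
  exact ⟨hmC, fun x hx => hme ▸ csInf_le hbdd hx⟩

/-- the pre-Cantor sets -/
def P : ℕ → Set ℝ
  | 0 => Icc 0 1
  | k+1 => f false '' P k ∪ f true '' P k

lemma P_subset_Icc : ∀ k, P k ⊆ Icc (0:ℝ) 1
  | 0 => le_refl _
  | k+1 => by
    rintro x (⟨y, hy, rfl⟩ | ⟨y, hy, rfl⟩) <;>
      exact f_mem_Icc _ (P_subset_Icc k hy)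

lemma one_mem_P : ∀ k, (1:ℝ) ∈ P k
  | 0 => by constructor <;> norm_num
  | k+1 => by
    right
    exact ⟨1, one_mem_P k, by rw [f_true_apply]; norm_num⟩


lemma zero_mem_P : ∀ k, (0:ℝ) ∈ P k
  | 0 => by constructor <;> norm_num
  | k+1 => by
    left
    exact ⟨0, zero_mem_P k, by rw [f_false_apply]; norm_num⟩

lemma f_image_Ioo (b : Bool) (a c : ℝ) : f b '' Ioo a c = Ioo (f b a) (f b c) := by
  rw [← f_image b (Ioo a c), fw_image_Ioo]; rfl

lemma f_false_Ioo01 : f false '' Ioo 0 1 = Ioo (0:ℝ) (1/3) := by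
  rw [f_image_Ioo]
  norm_num [f_false_apply]

lemma f_true_Ioo01 : f true '' Ioo 0 1 = Ioo (2/3:ℝ) 1 := by
  rw [f_image_Ioo]
  norm_num [f_true_apply]

lemma diff_P_succ (k : ℕ) :
    Ioo (0:ℝ) 1 \ P (k+1) =
      Ioo (1/3) (2/3) ∪ (f false '' (Ioo 0 1 \ P k) ∪ f true '' (Ioo 0 1 \ P k)) := by
  have himg : ∀ b : Bool, f b '' (Ioo 0 1 \ P k) = f b '' (Ioo 0 1) \ f b '' (P k) :=
    fun b => image_diff (f_strictMono b).injective _ _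
  have hsub0 : f false '' P k ⊆ Icc 0 (1/3) := by
    rintro x ⟨y, hy, rfl⟩
    have h := P_subset_Icc k hy
    rw [f_false_apply]
    exact ⟨by linarith [h.1], by linarith [h.2]⟩
  have hsub1 : f true '' P k ⊆ Icc (2/3) 1 := by
    rintro x ⟨y, hy, rfl⟩
    have h := P_subset_Icc k hy
    rw [f_true_apply]
    exact ⟨by linarith [h.1], by linarith [h.2]⟩
  have h13 : (1/3:ℝ) ∈ f false '' P k :=
    ⟨1, one_mem_P k, by rw [f_false_apply]⟩
  have h23 : (2/3:ℝ) ∈ f true '' P k :=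
    ⟨0, zero_mem_P k, by rw [f_true_apply]; norm_num⟩
  ext x
  constructor
  · rintro ⟨hx01, hxP⟩
    have h0 : x ∉ f false '' P k := fun h => hxP (Or.inl h)
    have h1 : x ∉ f true '' P k := fun h => hxP (Or.inr h)
    rcases lt_trichotomy x (1/3) with h | h | h
    · right; left
      rw [himg false, f_false_Ioo01]
      exact ⟨⟨hx01.1, h⟩, h0⟩
    · exact absurd (h ▸ h13) h0
    · rcases lt_trichotomy x (2/3) with h' | h' | h'
      · exact Or.inl ⟨h, h'⟩
      · exact absurd (h' ▸ h23) h1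
      · right; right
        rw [himg true, f_true_Ioo01]
        exact ⟨⟨h', hx01.2⟩, h1⟩
  · rintro (hm | hx | hx)
    · refine ⟨⟨by linarith [hm.1], by linarith [hm.2]⟩, ?_⟩
      rintro (h | h)
      · exact absurd (hsub0 h).2 (by linarith [hm.1])
      · exact absurd (hsub1 h).1 (by linarith [hm.2])
    · rw [himg false, f_false_Ioo01] at hx
      refine ⟨⟨hx.1.1, by linarith [hx.1.2]⟩, ?_⟩
      rintro (h | h)
      · exact hx.2 h
      · exact absurd (hsub1 h).1 (by linarith [hx.1.2])
    · rw [himg true, f_true_Ioo01] at hx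
      refine ⟨⟨by linarith [hx.1.1], hx.1.2⟩, ?_⟩
      rintro (h | h)
      · exact absurd (hsub0 h).2 (by linarith [hx.1.1])
      · exact hx.2 h

/-- the gap (removed middle-third interval) associated to a word -/
def gap (w : List Bool) : Set ℝ := fw w '' Ioo (1/3) (2/3)

lemma gap_cons (b : Bool) (w : List Bool) : gap (b :: w) = f b '' gap w := by
  rw [gap, gap, fw_cons, image_comp]

lemma gap_nil : gap [] = Ioo (1/3:ℝ) (2/3) := by
  rw [gap, fw_nil, image_id]

lemma diff_P (k : ℕ) :
    Ioo (0:ℝ) 1 \ P k = ⋃ w : List Bool, ⋃ (_ : w.length < k), gap w := by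
  induction k with
  | zero =>
    have : Ioo (0:ℝ) 1 \ P 0 = ∅ := by
      rw [show P 0 = Icc (0:ℝ) 1 from rfl, diff_eq_empty]
      exact Ioo_subset_Icc_self
    rw [this]
    symm
    simp
  | succ k ih =>
    rw [diff_P_succ, ih]
    ext x
    simp only [image_iUnion, mem_union, mem_iUnion]
    constructor
    · rintro (hm | ⟨w, hw, hx⟩ | ⟨w, hw, hx⟩)
      · exact ⟨[], by simp, gap_nil ▸ hm⟩
      · exact ⟨false :: w, by simpa using hw, (gap_cons false w) ▸ hx⟩
      · exact ⟨true :: w, by simpa using hw, (gap_cons true w) ▸ hx⟩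
    · rintro ⟨w, hw, hx⟩
      match w with
      | [] => exact Or.inl (gap_nil ▸ hx)
      | false :: w => exact Or.inr (Or.inl ⟨w, by simpa using hw, (gap_cons false w) ▸ hx⟩)
      | true :: w => exact Or.inr (Or.inr ⟨w, by simpa using hw, (gap_cons true w) ▸ hx⟩)


lemma gap_subset (w : List Bool) : gap w ⊆ Ioo (0:ℝ) 1 := by
  induction w with
  | nil => rw [gap_nil]; intro x hx; exact ⟨by linarith [hx.1], by linarith [hx.2]⟩
  | cons b w ih =>
    rw [gap_cons]
    refine subset_trans (image_mono ih) ?_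
    cases b
    · rw [f_false_Ioo01]; intro x hx; exact ⟨hx.1, by linarith [hx.2]⟩
    · rw [f_true_Ioo01]; intro x hx; exact ⟨by linarith [hx.1], hx.2⟩

lemma gap_disjoint : ∀ w w' : List Bool, w ≠ w' → Disjoint (gap w) (gap w') := by
  intro w
  induction w with
  | nil =>
    intro w' hne
    match w' with
    | [] => exact absurd rfl hne
    | b :: w' =>
      rw [Set.disjoint_left]
      intro x hx hx'
      rw [gap_nil] at hx
      rw [gap_cons] at hx'
      have := image_mono (gap_subset w') hx'
      cases b
      · rw [f_false_Ioo01] at this; linarith [hx.1, this.2]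
      · rw [f_true_Ioo01] at this; linarith [hx.2, this.1]
  | cons b w ih =>
    intro w' hne
    match w' with
    | [] =>
      rw [Set.disjoint_left]
      intro x hx hx'
      rw [gap_nil] at hx'
      rw [gap_cons] at hx
      have := image_mono (gap_subset w) hx
      cases b
      · rw [f_false_Ioo01] at this; linarith [hx'.1, this.2]
      · rw [f_true_Ioo01] at this; linarith [hx'.2, this.1]
    | b' :: w' =>
      by_cases hb : b = b'
      · subst hb
        have hww' : w ≠ w' := fun h => hne (h ▸ rfl)
        rw [gap_cons, gap_cons]
        exact (Set.disjoint_image_of_injective (f_strictMono b).injective (ih w' hww'))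
      · rw [Set.disjoint_left]
        intro x hx hx'
        rw [gap_cons] at hx hx'
        have h1 := image_mono (gap_subset w) hx
        have h2 := image_mono (gap_subset w') hx'
        match b, b', hb with
        | false, true, _ =>
          rw [f_false_Ioo01] at h1; rw [f_true_Ioo01] at h2
          linarith [h1.2, h2.1]
        | true, false, _ =>
          rw [f_true_Ioo01] at h1; rw [f_false_Ioo01] at h2
          linarith [h1.1, h2.2]
        | false, false, hb => exact hb rfl
        | true, true, hb => exact hb rfl


lemma volume_inner (a b ε : ℝ) (hab : a < b) (hε : 0 < ε) :
    volume {x ∈ Ioo a b | min (x - a) (b - x) ≤ ε} = ENNReal.ofReal (min (2*ε) (b - a)) := by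
  by_cases h : 2*ε < b - a
  · have hset : {x ∈ Ioo a b | min (x - a) (b - x) ≤ ε}
        = Ioc a (a+ε) ∪ Ico (b-ε) b := by
      ext x
      simp only [mem_setOf_eq, mem_Ioo, mem_union, mem_Ioc, mem_Ico, min_le_iff]
      constructor
      · rintro ⟨⟨h1, h2⟩, h3 | h3⟩
        · exact Or.inl ⟨h1, by linarith⟩
        · exact Or.inr ⟨by linarith, h2⟩
      · rintro (⟨h1, h2⟩ | ⟨h1, h2⟩)
        · exact ⟨⟨h1, by linarith⟩, Or.inl (by linarith)⟩
        · exact ⟨⟨by linarith, h2⟩, Or.inr (by linarith)⟩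
    rw [hset, measure_union ?_ measurableSet_Ico]
    · rw [Real.volume_Ioc, Real.volume_Ico, show a+ε-a = ε by ring, show b-(b-ε) = ε by ring,
        ← ENNReal.ofReal_add hε.le hε.le, min_eq_left h.le, show ε+ε = 2*ε by ring]
    · rw [Set.disjoint_left]
      intro x hx hx'
      have h1 := hx.2
      have h2 := hx'.1
      linarith
  · push_neg at h
    have hset : {x ∈ Ioo a b | min (x - a) (b - x) ≤ ε} = Ioo a b := by
      ext x
      simp only [mem_setOf_eq, mem_Ioo, min_le_iff]
      constructor
      · rintro ⟨h1, _⟩; exact h1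
      · intro h1
        refine ⟨h1, ?_⟩
        rcases le_or_gt (x - a) ε with h2 | h2
        · exact Or.inl h2
        · exact Or.inr (by linarith [h1.1, h1.2])
    rw [hset, Real.volume_Ioo, min_eq_right h]

variable {C : Set ℝ}

section withC
variable (hCne : C.Nonempty) (hCc : IsCompact C)
  (hC : C = (fun x : ℝ => x / 3) '' C ∪ (fun x : ℝ => x / 3 + 2 / 3) '' C)

include hC

lemma f_mem {x : ℝ} (b : Bool) (hx : x ∈ C) : f b x ∈ C := by
  rw [hC]
  cases b
  · left; exact ⟨x, hx, (f_false_apply x).symm⟩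
  · right; exact ⟨x, hx, (f_true_apply x).symm⟩

lemma fw_mem {x : ℝ} (w : List Bool) (hx : x ∈ C) : fw w x ∈ C := by
  induction w with
  | nil => exact hx
  | cons b w ih => exact f_mem hC b ih

lemma hCiter (k : ℕ) {x : ℝ} (hx : x ∈ C) :
    ∃ w : List Bool, w.length = k ∧ ∃ y ∈ C, fw w y = x := by
  induction k with
  | zero => exact ⟨[], rfl, x, hx, rfl⟩
  | succ k ih =>
    obtain ⟨w, hwl, y, hy, hfy⟩ := ih
    rw [hC] at hy
    rcases hy with ⟨z, hz, hze⟩ | ⟨z, hz, hze⟩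
    · refine ⟨w ++ [false], by simp [hwl], z, hz, ?_⟩
      rw [fw_append]
      simp only [Function.comp_apply]
      rw [show fw [false] z = f false z from rfl, f_false_apply]
      rw [← hze] at hfy; exact hfy
    · refine ⟨w ++ [true], by simp [hwl], z, hz, ?_⟩
      rw [fw_append]
      simp only [Function.comp_apply]
      rw [show fw [true] z = f true z from rfl, f_true_apply]
      rw [← hze] at hfy; exact hfy

include hCne hCc

lemma C_subset_Icc : C ⊆ Icc (0:ℝ) 1 := fun x hx =>
  ⟨(Czero_mem hCne hCc hC).2 x hx, (Cone_mem hCne hCc hC).2 x hx⟩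

lemma C_subset_P (k : ℕ) : C ⊆ P k := by
  induction k with
  | zero => exact C_subset_Icc hCne hCc hC
  | succ k ih =>
    intro x hx
    rw [hC] at hx
    rcases hx with ⟨y, hy, hye⟩ | ⟨y, hy, hye⟩
    · left; exact ⟨y, ih hy, by rw [← hye, f_false_apply]⟩
    · right; exact ⟨y, ih hy, by rw [← hye, f_true_apply]⟩

lemma approx (k : ℕ) {y : ℝ} (hy : y ∈ P k) :
    ∃ c ∈ C, |y - c| ≤ (1/3 : ℝ) ^ k := by
  induction k generalizing y with
  | zero =>
    refine ⟨0, (Czero_mem hCne hCc hC).1, ?_⟩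
    obtain ⟨h1, h2⟩ := hy
    rw [abs_of_nonneg (by linarith)]
    simpa using h2
  | succ k ih =>
    rcases hy with ⟨z, hz, rfl⟩ | ⟨z, hz, rfl⟩
    · obtain ⟨c, hc, hcd⟩ := ih hz
      refine ⟨f false c, f_mem hC false hc, ?_⟩
      have hd := fw_dist [false] z c
      simp only [List.length_cons, List.length_nil, pow_one] at hd
      rw [show fw [false] z = f false z from rfl, show fw [false] c = f false c from rfl] at hd
      simp only [pow_succ, pow_zero, one_mul] at hd ⊢
      rw [hd]
      linarith
    · obtain ⟨c, hc, hcd⟩ := ih hz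
      refine ⟨f true c, f_mem hC true hc, ?_⟩
      have hd := fw_dist [true] z c
      simp only [List.length_cons, List.length_nil, pow_one] at hd
      rw [show fw [true] z = f true z from rfl, show fw [true] c = f true c from rfl] at hd
      simp only [pow_succ, pow_zero, one_mul] at hd ⊢
      rw [hd]
      linarith

lemma iInter_P_subset_C {x : ℝ} (hx : ∀ k, x ∈ P k) : x ∈ C := by
  have hcl : closure C = C := hCc.isClosed.closure_eq
  rw [← hcl]
  rw [Metric.mem_closure_iff]
  intro δ hδ
  obtain ⟨k, hk⟩ := exists_pow_lt_of_lt_one hδ (by norm_num : (1/3:ℝ) < 1)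
  obtain ⟨c, hc, hcd⟩ := approx hCne hCc hC k (hx k)
  exact ⟨c, hc, lt_of_le_of_lt (by rwa [Real.dist_eq]) hk⟩


lemma L_eq : Ioo (0:ℝ) 1 \ C = ⋃ w : List Bool, gap w := by
  ext x
  constructor
  · rintro ⟨hx01, hxC⟩
    by_cases hP : ∀ k, x ∈ P k
    · exact absurd (iInter_P_subset_C hCne hCc hC hP) hxC
    · push_neg at hP
      obtain ⟨k, hk⟩ := hP
      have : x ∈ Ioo (0:ℝ) 1 \ P k := ⟨hx01, hk⟩
      rw [diff_P k] at this
      simp only [mem_iUnion] at this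
      obtain ⟨w, _, hx⟩ := this
      exact mem_iUnion.mpr ⟨w, hx⟩
  · intro hx
    rw [mem_iUnion] at hx
    obtain ⟨w, hx⟩ := hx
    have : x ∈ Ioo (0:ℝ) 1 \ P (w.length + 1) := by
      rw [diff_P]
      exact mem_iUnion.mpr ⟨w, mem_iUnion.mpr ⟨Nat.lt_succ_self _, hx⟩⟩
    exact ⟨this.1, fun hc => this.2 (C_subset_P hCne hCc hC (w.length+1) hc)⟩


lemma C_subset_closure_L {L : Set ℝ} (hL : L = Ioo 0 1 \ C) : C ⊆ closure L := by
  intro x hx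
  rw [Metric.mem_closure_iff]
  intro δ hδ
  obtain ⟨k, hk⟩ := exists_pow_lt_of_lt_one hδ (by norm_num : (1/3:ℝ) < 1)
  obtain ⟨w, hwl, y, hy, hfy⟩ := hCiter hC k hx
  refine ⟨fw w (1/2), ?_, ?_⟩
  · rw [hL, L_eq hCne hCc hC, mem_iUnion]
    exact ⟨w, ⟨1/2, by constructor <;> norm_num, rfl⟩⟩
  · have hy01 := C_subset_Icc hCne hCc hC hy
    have hd : dist x (fw w (1/2)) = |y - 1/2| / 3 ^ w.length := by
      rw [Real.dist_eq, ← hfy, fw_dist]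
    have h1 : |y - 1/2| ≤ 1 := by
      rw [abs_le]; constructor <;> [linarith [hy01.1]; linarith [hy01.2]]
    have h3 : ((1:ℝ)/3)^k = 1/3^k := by rw [div_pow, one_pow]
    have : dist x (fw w (1/2)) ≤ (1/3:ℝ)^k := by
      rw [hd, hwl, h3]
      gcongr
    linarith

lemma frontier_L {L : Set ℝ} (hL : L = Ioo 0 1 \ C) : frontier L = C := by
  have hLo : IsOpen L := by rw [hL]; exact isOpen_Ioo.sdiff hCc.isClosed
  have hfr : frontier L = closure L \ L := by
    rw [frontier, hLo.interior_eq]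
  apply Subset.antisymm
  · rw [hfr]
    rintro x ⟨hxc, hxL⟩
    have hx01 : x ∈ Icc (0:ℝ) 1 := by
      have h2 := closure_mono (show L ⊆ Ioo (0:ℝ) 1 by rw [hL]; exact diff_subset) hxc
      rwa [closure_Ioo (by norm_num : (0:ℝ) ≠ 1)] at h2
    by_contra hxC
    apply hxL
    rw [hL]
    refine ⟨⟨?_, ?_⟩, hxC⟩
    · rcases eq_or_lt_of_le hx01.1 with h | h
      · exact absurd (h ▸ (Czero_mem hCne hCc hC).1) hxC
      · exact h
    · rcases eq_or_lt_of_le hx01.2 with h | h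
      · exact absurd (h ▸ (Cone_mem hCne hCc hC).1) hxC
      · exact h
  · intro x hx
    rw [hfr]
    refine ⟨C_subset_closure_L hCne hCc hC hL hx, fun h => ?_⟩
    rw [hL] at h
    exact h.2 hx


lemma infDist_eq_gap {a b : ℝ} (ha : a ∈ C) (hb : b ∈ C) (hd : ∀ c ∈ C, c ≤ a ∨ b ≤ c)
    {x : ℝ} (hx : x ∈ Ioo a b) : infDist x C = min (x - a) (b - x) := by
  apply le_antisymm
  · refine le_min ?_ ?_
    · have h := infDist_le_dist_of_mem (x := x) ha
      rwa [Real.dist_eq, abs_of_pos (sub_pos.mpr hx.1)] at h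
    · have h := infDist_le_dist_of_mem (x := x) hb
      rwa [Real.dist_eq, abs_sub_comm, abs_of_pos (sub_pos.mpr hx.2)] at h
  · refine not_lt.mp fun hlt => ?_
    obtain ⟨c, hc, hdist⟩ := (infDist_lt_iff hCne).mp hlt
    rw [Real.dist_eq] at hdist
    have hge : min (x - a) (b - x) ≤ |x - c| := by
      rcases hd c hc with h | h
      · calc min (x - a) (b - x) ≤ x - a := min_le_left _ _
          _ ≤ x - c := by linarith
          _ ≤ |x - c| := le_abs_self _
      · calc min (x - a) (b - x) ≤ b - x := min_le_right _ _
          _ ≤ c - x := by linarith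
          _ ≤ |c - x| := le_abs_self _
          _ = |x - c| := abs_sub_comm _ _
    exact absurd hdist (not_lt.mpr hge)

lemma one_third_mem : (1/3 : ℝ) ∈ C := by
  have h := f_mem hC false (Cone_mem hCne hCc hC).1
  rwa [f_false_apply] at h

lemma two_thirds_mem : (2/3 : ℝ) ∈ C := by
  have h := f_mem hC true (Czero_mem hCne hCc hC).1
  rw [f_true_apply] at h
  norm_num at h
  exact h

lemma gap_volume {ε : ℝ} (hε : 0 < ε) (w : List Bool) :
    volume {x ∈ gap w | infDist x C ≤ ε}
      = ENNReal.ofReal (min (2*ε) ((3:ℝ)⁻¹ ^ (w.length+1))) := by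
  have hlen : fw w (2/3) - fw w (1/3) = (3:ℝ)⁻¹ ^ (w.length+1) := by
    rw [fw_eq w (2/3), fw_eq w (1/3), pow_succ, inv_pow]
    have h3 : (0:ℝ) < 3 ^ w.length := by positivity
    field_simp
    ring
  set a := fw w (1/3) with hadef
  set b := fw w (2/3) with hbdef
  have hab : a < b := fw_strictMono w (by norm_num)
  have ha : a ∈ C := fw_mem hC w (one_third_mem hCne hCc hC)
  have hb : b ∈ C := fw_mem hC w (two_thirds_mem hCne hCc hC)
  have hgap : gap w = Ioo a b := fw_image_Ioo w _ _
  have hd : ∀ c ∈ C, c ≤ a ∨ b ≤ c := by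
    intro c hc
    by_contra hcon
    push_neg at hcon
    have hcL : c ∈ Ioo (0:ℝ) 1 \ C := by
      rw [L_eq hCne hCc hC]
      exact mem_iUnion.mpr ⟨w, hgap ▸ (show c ∈ Ioo a b from ⟨hcon.1, hcon.2⟩)⟩
    exact hcL.2 hc
  rw [hgap]
  have hseteq : {x ∈ Ioo a b | infDist x C ≤ ε} = {x ∈ Ioo a b | min (x - a) (b - x) ≤ ε} := by
    ext x
    simp only [mem_setOf_eq]
    constructor
    · rintro ⟨hx, h⟩
      exact ⟨hx, by rwa [← infDist_eq_gap hCne hCc hC ha hb hd hx]⟩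
    · rintro ⟨hx, h⟩
      exact ⟨hx, by rwa [infDist_eq_gap hCne hCc hC ha hb hd hx]⟩
  rw [hseteq, volume_inner a b ε hab hε, hlen]

end withC


end
end Stmt4

open Stmt4 in
/-- Let `C` be the ternary Cantor set (the unique nonempty compact
subset of `ℝ` with `C = (1/3)C ∪ ((1/3)C + 2/3)`) and `L = (0,1) \ C` the Cantor
string. Then for every `ε` with `0 < ε ≤ 1/6`, the Lebesgue measure of
`{x ∈ L : dist(x, ∂L) ≤ ε}` equals `2ε(2^n − 1) + (3/2)(2/3)^{n+1}`, where
`n = ⌊log(1/(2ε)) / log 3⌋`. -/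
theorem stmt_4 (C : Set ℝ)
    (hCne : C.Nonempty) (hCc : IsCompact C)
    (hC : C = (fun x : ℝ => x / 3) '' C ∪ (fun x : ℝ => x / 3 + 2 / 3) '' C)
    (L : Set ℝ) (hL : L = Set.Ioo (0 : ℝ) 1 \ C) :
    ∀ ε : ℝ, 0 < ε → ε ≤ 1 / 6 →
      volume {x ∈ L | infDist x (frontier L) ≤ ε}
        = ENNReal.ofReal
            (2 * ε * (2 ^ (⌊Real.log (1 / (2 * ε)) / Real.log 3⌋₊) - 1)
              + (3 / 2) * (2 / 3) ^ (⌊Real.log (1 / (2 * ε)) / Real.log 3⌋₊ + 1)) := by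
  intro ε hε hε6
  set n₀ := ⌊Real.log (1 / (2 * ε)) / Real.log 3⌋₊ with hn₀
  have h2ε : 0 < 2*ε := by linarith
  have hlog3 : 0 < Real.log 3 := Real.log_pos (by norm_num)
  have ht1 : (3:ℝ) ≤ 1/(2*ε) := by rw [le_div_iff₀ h2ε]; linarith
  have htpos : 0 < 1/(2*ε) := by positivity
  have hq0 : 0 ≤ Real.log (1/(2*ε)) / Real.log 3 :=
    div_nonneg (Real.log_nonneg (by linarith)) hlog3.le
  have hfl : (n₀ : ℝ) ≤ Real.log (1/(2*ε)) / Real.log 3 := Nat.floor_le hq0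
  have hfu : Real.log (1/(2*ε)) / Real.log 3 < n₀ + 1 := Nat.lt_floor_add_one _
  have hpow_le : (3:ℝ)^n₀ ≤ 1/(2*ε) := by
    have h1 : (n₀:ℝ) * Real.log 3 ≤ Real.log (1/(2*ε)) := by
      rw [← le_div_iff₀ hlog3]; exact hfl
    have h2 : Real.log ((3:ℝ)^n₀) ≤ Real.log (1/(2*ε)) := by rwa [Real.log_pow]
    exact (Real.log_le_log_iff (by positivity) htpos).mp h2
  have hpow_gt : 1/(2*ε) < (3:ℝ)^(n₀+1) := by
    have h1 : Real.log (1/(2*ε)) < ((n₀+1 : ℕ):ℝ) * Real.log 3 := by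
      rw [← div_lt_iff₀ hlog3]; push_cast; exact hfu
    have h2 : Real.log (1/(2*ε)) < Real.log ((3:ℝ)^(n₀+1)) := by rwa [Real.log_pow]
    exact (Real.log_lt_log_iff htpos (by positivity)).mp h2
  have key1 : 2*ε ≤ (3:ℝ)⁻¹^n₀ := by
    have h3 : (0:ℝ) < 3^n₀ := by positivity
    rw [inv_pow, inv_eq_one_div, le_div_iff₀ h3]
    have := (le_div_iff₀ h2ε).mp hpow_le
    linarith
  have key2 : (3:ℝ)⁻¹^(n₀+1) < 2*ε := by
    have h3 : (0:ℝ) < 3^(n₀+1) := by positivity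
    rw [inv_pow, inv_eq_one_div, div_lt_iff₀ h3]
    have := (div_lt_iff₀ h2ε).mp hpow_gt
    linarith
  rw [frontier_L hCne hCc hC hL]
  have hbig : {x ∈ L | infDist x C ≤ ε} = ⋃ w : List Bool, {x ∈ gap w | infDist x C ≤ ε} := by
    rw [hL, L_eq hCne hCc hC]
    ext x
    simp only [Set.mem_setOf_eq, Set.mem_iUnion]
    tauto
  rw [hbig]
  have hmeas : ∀ w : List Bool, MeasurableSet {x ∈ gap w | infDist x C ≤ ε} := by
    intro w
    have hg : MeasurableSet (gap w) := by
      rw [gap, fw_image_Ioo]; exact measurableSet_Ioo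
    exact hg.inter ((continuous_infDist_pt C).measurable measurableSet_Iic)
  have hdisj : Pairwise (Function.onFun Disjoint
      (fun w : List Bool => {x ∈ gap w | infDist x C ≤ ε})) := by
    intro w w' hne
    exact (gap_disjoint w w' hne).mono (Set.sep_subset _ _) (Set.sep_subset _ _)
  rw [measure_iUnion hdisj hmeas]
  have hvol : (fun w : List Bool => volume {x ∈ gap w | infDist x C ≤ ε})
      = fun w : List Bool => ENNReal.ofReal (min (2*ε) ((3:ℝ)⁻¹ ^ (w.length+1))) :=
    funext fun w => gap_volume hCne hCc hC hε w
  rw [hvol]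
  have hsig : ∑' (w : List Bool), ENNReal.ofReal (min (2*ε) ((3:ℝ)⁻¹ ^ (w.length+1)))
      = ∑' (n : ℕ), (2:ℝ≥0∞)^n * ENNReal.ofReal (min (2*ε) ((3:ℝ)⁻¹ ^ (n+1))) := by
    calc ∑' (w : List Bool), ENNReal.ofReal (min (2*ε) ((3:ℝ)⁻¹ ^ (w.length+1)))
        = ∑' (p : Σ n, Fin n → Bool), ENNReal.ofReal (min (2*ε) ((3:ℝ)⁻¹ ^ (p.1+1))) :=
          (List.equivSigmaTuple.tsum_eq
            (fun p : (Σ n, Fin n → Bool) => ENNReal.ofReal (min (2*ε) ((3:ℝ)⁻¹ ^ (p.1+1)))))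
      _ = ∑' (n : ℕ), ∑' (_v : Fin n → Bool), ENNReal.ofReal (min (2*ε) ((3:ℝ)⁻¹ ^ (n+1))) :=
          ENNReal.tsum_sigma' _
      _ = ∑' (n : ℕ), (2:ℝ≥0∞)^n * ENNReal.ofReal (min (2*ε) ((3:ℝ)⁻¹ ^ (n+1))) := by
          apply tsum_congr
          intro n
          rw [tsum_fintype, Finset.sum_const, Finset.card_univ]
          simp only [Fintype.card_fun, Fintype.card_bool, Fintype.card_fin, nsmul_eq_mul]
          push_cast
          ring
  rw [hsig]
  rw [← Summable.sum_add_tsum_nat_add' (f := fun n => (2:ℝ≥0∞)^n *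
      ENNReal.ofReal (min (2*ε) ((3:ℝ)⁻¹ ^ (n+1)))) (k := n₀) ENNReal.summable]
  have hhead : ∑ i ∈ Finset.range n₀, (2:ℝ≥0∞)^i * ENNReal.ofReal (min (2*ε) ((3:ℝ)⁻¹ ^ (i+1)))
      = ENNReal.ofReal ((2^n₀ - 1) * (2*ε)) := by
    have hterm : ∀ i ∈ Finset.range n₀,
        (2:ℝ≥0∞)^i * ENNReal.ofReal (min (2*ε) ((3:ℝ)⁻¹ ^ (i+1)))
          = ENNReal.ofReal ((2:ℝ)^i * (2*ε)) := by
      intro i hi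
      have hi' : i + 1 ≤ n₀ := Finset.mem_range.mp hi
      have hle : (3:ℝ)⁻¹^n₀ ≤ (3:ℝ)⁻¹^(i+1) :=
        pow_le_pow_of_le_one (by norm_num) (by norm_num) hi'
      have hmin : min (2*ε) ((3:ℝ)⁻¹ ^ (i+1)) = 2*ε := min_eq_left (le_trans key1 hle)
      rw [hmin, ENNReal.ofReal_mul (by positivity : (0:ℝ) ≤ 2^i)]
      congr 1
      rw [ENNReal.ofReal_pow (by norm_num : (0:ℝ) ≤ 2)]
      norm_num
    rw [Finset.sum_congr rfl hterm,
      ← ENNReal.ofReal_sum_of_nonneg (fun i _ => by positivity)]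
    congr 1
    rw [← Finset.sum_mul, geom_sum_eq (by norm_num : (2:ℝ) ≠ 1)]
    norm_num
  have htail : ∑' (i : ℕ), (2:ℝ≥0∞)^(i+n₀) * ENNReal.ofReal (min (2*ε) ((3:ℝ)⁻¹ ^ (i+n₀+1)))
      = ENNReal.ofReal ((2/3:ℝ)^n₀) := by
    have hterm : ∀ i : ℕ,
        (2:ℝ≥0∞)^(i+n₀) * ENNReal.ofReal (min (2*ε) ((3:ℝ)⁻¹ ^ (i+n₀+1)))
          = ENNReal.ofReal (((2/3:ℝ)^n₀ * 3⁻¹) * (2/3)^i) := by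
      intro i
      have hle : (3:ℝ)⁻¹^(i+n₀+1) ≤ (3:ℝ)⁻¹^(n₀+1) :=
        pow_le_pow_of_le_one (by norm_num) (by norm_num) (by omega)
      have hmin : min (2*ε) ((3:ℝ)⁻¹ ^ (i+n₀+1)) = (3:ℝ)⁻¹ ^ (i+n₀+1) :=
        min_eq_right (le_of_lt (lt_of_le_of_lt hle key2))
      rw [hmin]
      rw [show (((2/3:ℝ)^n₀ * 3⁻¹) * (2/3)^i : ℝ) = (2:ℝ)^(i+n₀) * ((3:ℝ)⁻¹ ^ (i+n₀+1)) by
        rw [div_eq_mul_inv, mul_pow, mul_pow, pow_add, pow_add, pow_add]; ring]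
      rw [ENNReal.ofReal_mul (by positivity : (0:ℝ) ≤ 2^(i+n₀))]
      congr 1
      rw [ENNReal.ofReal_pow (by norm_num : (0:ℝ) ≤ 2)]
      norm_num
    rw [tsum_congr hterm]
    have hsum : Summable (fun i : ℕ => ((2/3:ℝ)^n₀ * 3⁻¹) * (2/3)^i) :=
      (summable_geometric_of_lt_one (by norm_num) (by norm_num)).mul_left _
    rw [← ENNReal.ofReal_tsum_of_nonneg (fun i => by positivity) hsum]
    congr 1
    rw [tsum_mul_left, tsum_geometric_of_lt_one (by norm_num) (by norm_num)]
    norm_num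
    ring
  rw [hhead, htail]
  have h1le : (1:ℝ) ≤ 2^n₀ := one_le_pow₀ (by norm_num)
  rw [← ENNReal.ofReal_add (by nlinarith) (by positivity)]
  congr 1
  rw [pow_succ]
  ring
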